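/- Let α = (α_1,…,α_n) and β = (β_1,…,β_n) be compositions with V(α) ⊆ V(β). The map Tab is a bijection from L(α,β) to VT(V(β)/V(α)). Moreover, if Tab(p) = T, then for every positive integer h the total number of diagonal steps in p ending at height h (resp. ω+h) equals the number of entries h (resp. h*) in T. -/

import Mathlib

open scoped Classical

namespace GrothJT

/-! ## Partitions -/

/-- A partition: a weakly decreasing sequence of nonnegative integers with finitely many
nonzero terms.  `part i` is the `i`-th part `λ_i` (indices `i ≥ 1` are the relevant ones). -/
structure Partition where
  part : ℕ → ℕ
  antitone' : ∀ i j : ℕ, i ≤ j → part j ≤ part i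
  eventually_zero : ∃ N, ∀ i, N ≤ i → part i = 0

namespace Partition

/-- The conjugate partition: `conj lam j = #{i ≥ 1 : λ_i ≥ j}`. -/
noncomputable def conj (lam : Partition) (j : ℕ) : ℕ :=
  Set.ncard {i : ℕ | 1 ≤ i ∧ j ≤ lam.part i}

/-- The cells of the Young diagram of a partition (row `i`, column `j`, both `≥ 1`). -/
def cells (lam : Partition) : Set (ℕ × ℕ) :=
  {c | 1 ≤ c.1 ∧ 1 ≤ c.2 ∧ c.2 ≤ lam.part c.1}

/-- `len lam = ℓ(λ)`, the number of nonzero parts. -/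
noncomputable def len (lam : Partition) : ℕ := lam.conj 1

/-- The empty partition. -/
protected def zero : Partition :=
  ⟨fun _ => 0, fun _ _ _ => le_rfl, ⟨0, fun _ _ => rfl⟩⟩

/-- `Sub mu lam` means `μ ⊆ λ`. -/
def Sub (mu lam : Partition) : Prop := ∀ i, mu.part i ≤ lam.part i

end Partition

/-- The cells of the skew shape `λ/μ`. -/
def skewCells (lam mu : Partition) : Set (ℕ × ℕ) := lam.cells \ mu.cells

/-! ## Formal power series in the variables `x = (x_1, x_2, …)` and `t = (t_1, t_2, …)` -/

/-- Variable indices: `Sum.inl i` is the variable `x_i`, and `Sum.inr i` is `t_i`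
(only indices `i ≥ 1` are used). -/
abbrev Var := ℕ ⊕ ℕ

abbrev PS := MvPowerSeries Var ℤ

/-- The elementary symmetric function of degree `k` in the set `V` of variables,
as a formal power series: `e_0 = 1` and `e_k = 0` for `k < 0`. -/
noncomputable def eVar (V : Set Var) (k : ℤ) : PS := fun d =>
  if 0 ≤ k ∧ (∀ v, d v ≤ 1) ∧ (∀ v, d v ≠ 0 → v ∈ V) ∧ ((d.sum fun _ m => m : ℕ) : ℤ) = k
  then 1 else 0

/-- The set of all the variables `x_1, x_2, …`. -/
def xVars : Set Var := {v | ∃ i, 1 ≤ i ∧ v = Sum.inl i}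

/-- The set of the variables `t_a, t_{a+1}, …, t_b`. -/
def tRange (a b : ℕ) : Set Var := {v | ∃ i, a ≤ i ∧ i ≤ b ∧ v = Sum.inr i}

/-! ## Reverse plane partitions and refined dual stable Grothendieck polynomials -/

/-- A reverse plane partition of shape `λ/μ`: a filling of the skew shape with positive
integers, weakly increasing along each row and each column (and `0` outside the shape). -/
structure RPP (lam mu : Partition) where
  entry : ℕ × ℕ → ℕ
  pos : ∀ c ∈ skewCells lam mu, 1 ≤ entry c
  zero_outside : ∀ c, c ∉ skewCells lam mu → entry c = 0
  row_weak : ∀ i j, (i, j) ∈ skewCells lam mu → (i, j + 1) ∈ skewCells lam mu →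
    entry (i, j) ≤ entry (i, j + 1)
  col_weak : ∀ i j, (i, j) ∈ skewCells lam mu → (i + 1, j) ∈ skewCells lam mu →
    entry (i, j) ≤ entry (i + 1, j)

/-- The exponent of the weight monomial `wt(R) = ∏ x_i^{a_i(R)} t_i^{b_i(R)}` of an RPP:
`a_i(R)` is the number of columns containing an `i`, and `b_i(R)` is the number of cells
`(i,j)` with `R(i,j) = R(i+1,j)`. -/
noncomputable def rppExp (lam mu : Partition) (R : RPP lam mu) : Var → ℕ
  | Sum.inl i => Set.ncard {j : ℕ | ∃ r, (r, j) ∈ skewCells lam mu ∧ R.entry (r, j) = i}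
  | Sum.inr i => Set.ncard {j : ℕ | (i, j) ∈ skewCells lam mu ∧ (i + 1, j) ∈ skewCells lam mu ∧
      R.entry (i, j) = R.entry (i + 1, j)}

/-- The refined dual stable Grothendieck polynomial
`g̃_{λ/μ}(x;t) = ∑_{R ∈ RPP(λ/μ)} wt(R)`, as a formal power series: the coefficient of a
monomial is the number of RPPs of shape `λ/μ` with that weight. -/
noncomputable def gt (lam mu : Partition) : PS := fun d =>
  (Set.ncard {R : RPP lam mu | ∀ v, rppExp lam mu R v = d v} : ℤ)

/-- The Jacobi–Trudi matrix whose `(i,j)` entry (1-indexed) is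
`e_{λ'_i - μ'_j - i + j}(x_1, x_2, …, t_{μ'_j+1}, …, t_{λ'_i-1})`. -/
noncomputable def JTmat (lam mu : Partition) (n : ℕ) : Matrix (Fin n) (Fin n) PS :=
  Matrix.of fun i j =>
    eVar (xVars ∪ tRange (mu.conj (j.1 + 1) + 1) (lam.conj (i.1 + 1) - 1))
      ((lam.conj (i.1 + 1) : ℤ) - (mu.conj (j.1 + 1) : ℤ) - (i.1 + 1) + (j.1 + 1))

/-! ## `x`-only versions (dual stable Grothendieck polynomials) -/

/-- The elementary symmetric function `e_k(x_1, x_2, …)` in the variables `x_i`, `i ≥ 1`. -/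
noncomputable def eX (k : ℤ) : MvPowerSeries ℕ ℤ := fun d =>
  if 0 ≤ k ∧ (∀ v, d v ≤ 1) ∧ d 0 = 0 ∧ ((d.sum fun _ m => m : ℕ) : ℤ) = k then 1 else 0

/-- The dual stable Grothendieck polynomial `g_{λ/μ}(x) = ∑_{R ∈ RPP(λ/μ)} ∏ x_i^{a_i(R)}`. -/
noncomputable def gx (lam mu : Partition) : MvPowerSeries ℕ ℤ := fun d =>
  (Set.ncard {R : RPP lam mu |
    ∀ i, Set.ncard {j : ℕ | ∃ r, (r, j) ∈ skewCells lam mu ∧ R.entry (r, j) = i} = d i} : ℤ)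

/-- `ibinom m k` is the binomial coefficient `C(m,k)`, with `C(m,k) = δ_{k,0}` for `m < 0`. -/
def ibinom (m : ℤ) (k : ℕ) : ℤ :=
  if m < 0 then (if k = 0 then 1 else 0) else (m.toNat.choose k : ℤ)


/-! ## Lattice paths in `G = ℕ × ℕ_ω` -/

/-- A path in `G = ℕ × ℕ_ω`: a pair of infinite sequences of points whose consecutive
differences are up steps `(0,1)` or diagonal steps `(1,1)`.  Since every step raises the
height by one, the point at height `m` (resp. `ω + m`) has first coordinate `lo m`
(resp. `hi m`).  Both sequences are eventually constant, and the second one starts at the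
limit of the first. -/
structure PathLP where
  lo : ℕ → ℕ
  hi : ℕ → ℕ
  lo_step : ∀ m, lo (m + 1) = lo m ∨ lo (m + 1) = lo m + 1
  hi_step : ∀ m, hi (m + 1) = hi m ∨ hi (m + 1) = hi m + 1
  lo_eventually : ∃ N, ∀ m, N ≤ m → lo m = lo N
  hi_eventually : ∃ N, ∀ m, N ≤ m → hi m = hi N
  link : ∃ N, (∀ m, N ≤ m → lo m = lo N) ∧ hi 0 = lo N

/-- `PathFromTo p a b`: `p` is a path from `(a, 0)` to `(b, 2ω)`. -/
def PathFromTo (p : PathLP) (a b : ℕ) : Prop :=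
  p.lo 0 = a ∧ ∃ N, ∀ m, N ≤ m → p.hi m = b

/-- The exponent of the weight monomial `wt(p) = ∏ x_i^{a_i(p)} t_i^{b_i(p)}` of a path:
`a_i(p)` (resp. `b_i(p)`) is the number of diagonal steps ending at height `i`
(resp. `ω + i`). -/
noncomputable def pathExp (p : PathLP) : Var → ℕ
  | Sum.inl i => if 1 ≤ i ∧ p.lo i = p.lo (i - 1) + 1 then 1 else 0
  | Sum.inr i => if 1 ≤ i ∧ p.hi i = p.hi (i - 1) + 1 then 1 else 0

/-- `L(i,j)`: the set of paths from `(μ'_i + n - i, 0)` to `(λ'_j + n - j, 2ω)` with no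
diagonal step ending at a height in `{ω+1, …, ω+μ'_i}` nor at a height above
`ω + λ'_j - 1`. -/
def Lij (lam mu : Partition) (n i j : ℕ) : Set PathLP :=
  {p | PathFromTo p (mu.conj i + n - i) (lam.conj j + n - j) ∧
    (∀ m, 1 ≤ m → m ≤ mu.conj i → p.hi m = p.hi (m - 1)) ∧
    (∀ m, 1 ≤ m → lam.conj j ≤ m → p.hi m = p.hi (m - 1))}

/-- An `n`-path. -/
abbrev NPath (n : ℕ) := Fin n → PathLP

/-- `InL lam mu n π p` : the `n`-path `p` lies in `L(π)`,
i.e. `p_i ∈ L(i, π(i))` for all `i` (1-indexed). -/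
def InL (lam mu : Partition) (n : ℕ) (π : Equiv.Perm (Fin n)) (p : NPath n) : Prop :=
  ∀ i : Fin n, p i ∈ Lij lam mu n (i.1 + 1) ((π i).1 + 1)

/-- Two paths have a common point. -/
def Crossing (p q : PathLP) : Prop := (∃ m, p.lo m = q.lo m) ∨ (∃ m, p.hi m = q.hi m)

/-- An `n`-path is noncrossing if no two of its paths share a point. -/
def IsNC (n : ℕ) (p : NPath n) : Prop := ∀ i j : Fin n, i ≠ j → ¬ Crossing (p i) (p j)

/-! ## The blocks `D_k` -/

/-- The set of distinct nonzero parts of `μ`. -/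
def partsSet (mu : Partition) : Set ℕ := {v | 1 ≤ v ∧ ∃ i, 1 ≤ i ∧ mu.part i = v}

/-- `r`, the number of distinct nonzero parts of `μ`. -/
noncomputable def rDist (mu : Partition) : ℕ := (partsSet mu).ncard

/-- `dSeq mu n 0 = d_0 = n`, and for `1 ≤ k ≤ r`, `dSeq mu n k = d_k` is the `k`-th largest
distinct nonzero part of `μ`; for `k > r` it is `0` (in particular `d_{r+1} = 0`). -/
noncomputable def dSeq (mu : Partition) (n : ℕ) : ℕ → ℕ
  | 0 => n
  | (k + 1) => sSup {v | v ∈ partsSet mu ∧ Set.ncard {w ∈ partsSet mu | v ≤ w} = k + 1}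

/-- The block `D_k = {d_k + 1, …, d_{k-1}}` of column indices. -/
def Dblock (mu : Partition) (n k : ℕ) : Set ℕ :=
  {j | dSeq mu n k < j ∧ j ≤ dSeq mu n (k - 1)}

/-- An `n`-path is semi-noncrossing if `p_i` and `p_j` have no common point whenever
`i ≠ j` both lie in some `D_k` with `1 ≤ k ≤ r`. -/
def IsSNC (mu : Partition) (n : ℕ) (p : NPath n) : Prop :=
  ∀ k, 1 ≤ k → k ≤ rDist mu →
    ∀ i j : Fin n, i ≠ j → (i.1 + 1) ∈ Dblock mu n k → (j.1 + 1) ∈ Dblock mu n k →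
      ¬ Crossing (p i) (p j)

/-- The set of semi-noncrossing `n`-paths in `L`. -/
def SNCset (lam mu : Partition) (n : ℕ) : Set (NPath n) :=
  {p | (∃ π, InL lam mu n π p) ∧ IsSNC mu n p}

/-- The (unsigned) weight exponent of an `n`-path: `wt(p_1) ⋯ wt(p_n)`. -/
noncomputable def npathExp (n : ℕ) (p : NPath n) : Var → ℕ :=
  fun v => ∑ i : Fin n, pathExp (p i) v

/-- The signed sum `∑_{p ∈ L^SNC} wt(p)` of the weights of all semi-noncrossing `n`-paths,
as a formal power series: the coefficient of a monomial is `∑_π sign(π) · #{p ∈ L^SNC(π)}`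
with the given weight (the type of an `n`-path in `L` is unique). -/
noncomputable def sncSum (lam mu : Partition) (n : ℕ) : PS := fun d =>
  ∑ π : Equiv.Perm (Fin n),
    ((Equiv.Perm.sign π : ℤˣ) : ℤ) *
      (Set.ncard {p : NPath n | InL lam mu n π p ∧ IsSNC mu n p ∧
        ∀ v, npathExp n p v = d v} : ℤ)

/-- The sum `∑_{p ∈ L(i,j)} wt(p)` as a formal power series. -/
noncomputable def LijSum (lam mu : Partition) (n i j : ℕ) : PS := fun d =>
  (Set.ncard {p ∈ Lij lam mu n i j | ∀ v, pathExp p v = d v} : ℤ)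


/-! ## Extended integers and tableaux -/

/-- Extended integers `{1̄ < 2̄ < ⋯ < 1 < 2 < ⋯ < 1* < 2* < ⋯}`:
`bar i` is the negative entry `ī`, `pl i` is the ordinary entry `i`, and `st i` is the
`ω`-entry `i*`. -/
abbrev Ext := Lex (ℕ ⊕ Lex (ℕ ⊕ ℕ))

def bar (i : ℕ) : Ext := toLex (Sum.inl i)
def pl (i : ℕ) : Ext := toLex (Sum.inr (toLex (Sum.inl i)))
def st (i : ℕ) : Ext := toLex (Sum.inr (toLex (Sum.inr i)))

/-- A tableau: a partial filling of `ℤ⁺ × ℤ⁺` (as a subset of `ℕ × ℕ`) with extended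
integers; `none` means the cell is absent. -/
abbrev Tb := ℕ × ℕ → Option Ext

/-- The `k`-th smallest element of a set of extended integers (1-indexed); `none` if there
is no element `e` with exactly `k` elements `≤ e` in the set. -/
noncomputable def nthSmall (S : Set Ext) (k : ℕ) : Option Ext :=
  if h : ∃ e, e ∈ S ∧ Set.ncard {e' ∈ S | e' ≤ e} = k then some h.choose else none

/-- The set of labels of the diagonal steps of a path: a diagonal step ending at height `m`
is recorded as `pl m`, and one ending at height `ω + m` as `st m`. -/
def labelSet (p : PathLP) : Set Ext :=
  {e | ∃ m, 1 ≤ m ∧ ((p.lo m = p.lo (m - 1) + 1 ∧ e = pl m) ∨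
    (p.hi m = p.hi (m - 1) + 1 ∧ e = st m))}

/-- The map `Tab` sending an `n`-path to a tableau: for each `i` and `k ≥ 1`, the cell
`(α_i + k, i)` contains the ending height of the `k`-th diagonal step of `p_i`. -/
noncomputable def TabU (alpha : ℕ → ℕ) (n : ℕ) (p : NPath n) : Tb := fun c =>
  if h : 1 ≤ c.2 ∧ c.2 ≤ n ∧ alpha c.2 < c.1 then
    nthSmall (labelSet (p ⟨c.2 - 1, by omega⟩)) (c.1 - alpha c.2)
  else none

/-! ## Vertical tableaux -/

/-- A vertical tableau with cell set `S`: entries from `{1 < 2 < ⋯ < 1* < 2* < ⋯}`,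
strictly increasing down each column, with support exactly `S`. -/
def IsVTsh (S : Set (ℕ × ℕ)) (T : Tb) : Prop :=
  (∀ c, (T c).isSome ↔ c ∈ S) ∧
  (∀ c e, T c = some e → ∃ a, 1 ≤ a ∧ (e = pl a ∨ e = st a)) ∧
  (∀ i j e₁ e₂, T (i, j) = some e₁ → T (i + 1, j) = some e₂ → e₁ < e₂)

/-- The cells of the vertical diagram `V(β)/V(α)` (columns `1 ≤ j ≤ n`). -/
def VTcells (alpha beta : ℕ → ℕ) (n : ℕ) : Set (ℕ × ℕ) :=
  {c | 1 ≤ c.2 ∧ c.2 ≤ n ∧ alpha c.2 < c.1 ∧ c.1 ≤ beta c.2}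

/-- `L(α,β)`: the set of `n`-paths `(p_1, …, p_n)` where `p_i` is a path from
`(α_i + n - i, 0)` to `(β_i + n - i, 2ω)`. -/
def Lab (alpha beta : ℕ → ℕ) (n : ℕ) : Set (NPath n) :=
  {p | ∀ i : Fin n, PathFromTo (p i) (alpha (i.1 + 1) + n - (i.1 + 1))
    (beta (i.1 + 1) + n - (i.1 + 1))}

/-- The cells of the vertical diagram `π(λ)`: column `j` (for `1 ≤ j ≤ n`) has the cells
`(i, j)` with `1 ≤ i ≤ λ'_{π(j)} - π(j) + j`. -/
def permLamCells (lam : Partition) (n : ℕ) (π : Equiv.Perm (Fin n)) : Set (ℕ × ℕ) :=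
  {c | ∃ h : 1 ≤ c.2 ∧ c.2 ≤ n, 1 ≤ c.1 ∧
    (c.1 : ℤ) ≤ (lam.conj ((π ⟨c.2 - 1, by omega⟩).1 + 1) : ℤ) -
      ((π ⟨c.2 - 1, by omega⟩).1 + 1) + c.2}

/-- The cells of the vertical diagram `V(μ')` of `μ` (columns `1 ≤ j ≤ n`). -/
def muVertCells (mu : Partition) (n : ℕ) : Set (ℕ × ℕ) :=
  {c | 1 ≤ c.2 ∧ c.2 ≤ n ∧ 1 ≤ c.1 ∧ c.1 ≤ mu.conj c.2}

/-! ## RSE-tableaux (in the unified extended-integer form) -/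

/-- An RSE-tableau of shape `λ` and level `k`, with the entries of `R` taken from
`{1̄ < 2̄ < ⋯ < 1 < 2 < ⋯}` (the set `oRSE_k(λ)`), viewed as a single tableau of shape `λ`
over the extended integers (entries `a` of the elegant tableau `E` written as `a*`):
the support is the Young diagram of `λ`; rows and columns weakly increase; there are no
`ω`-entries in rows `≤ k`; an `ω`-entry `a*` in row `i` satisfies `k ≤ a` and
`1 ≤ a ≤ i - 1` (`E` is elegant with entries `≥ k`); `ω`-entries strictly increase down
columns (`E` is an SSYT); and non-`ω`-entries strictly increase down columns within rows
`≥ k` (rows `≥ k` of `R` form an SSYT). -/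
def IsORSE (lam : Partition) (k : ℕ) (T : Tb) : Prop :=
  (∀ c, (T c).isSome ↔ c ∈ lam.cells) ∧
  (∀ c a, T c = some (bar a) → 1 ≤ a) ∧
  (∀ c a, T c = some (pl a) → 1 ≤ a) ∧
  (∀ i j e₁ e₂, T (i, j) = some e₁ → T (i, j + 1) = some e₂ → e₁ ≤ e₂) ∧
  (∀ i j e₁ e₂, T (i, j) = some e₁ → T (i + 1, j) = some e₂ → e₁ ≤ e₂) ∧
  (∀ i j a, T (i, j) = some (st a) → k < i) ∧
  (∀ i j a, T (i, j) = some (st a) → k ≤ a ∧ 1 ≤ a ∧ a + 1 ≤ i) ∧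
  (∀ i j a b, T (i, j) = some (st a) → T (i + 1, j) = some (st b) → a < b) ∧
  (∀ i j e₁ e₂, k ≤ i → T (i, j) = some e₁ → (¬ ∃ a, e₁ = st a) →
    T (i + 1, j) = some e₂ → (¬ ∃ a, e₂ = st a) → e₁ < e₂)

/-- A skew RSE-tableau of shape `λ/μ` and level `k`, viewed (via the identification filling
every cell of row `i` of `μ` with `ī`) as a tableau of shape `λ` over the extended
integers: an element of `oRSE_k(λ)` whose negative entries are exactly `ī` on row `i` of
`μ`, and whose `ω`-entries `a*` in column `j` moreover satisfy `μ'_j + 1 ≤ a`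
(`E` is `μ`-elegant). -/
def IsSkewRSE (lam mu : Partition) (k : ℕ) (T : Tb) : Prop :=
  IsORSE lam k T ∧
  (∀ i j, (i, j) ∈ mu.cells → T (i, j) = some (bar i)) ∧
  (∀ i j a, T (i, j) = some (bar a) → (i, j) ∈ mu.cells) ∧
  (∀ i j a, T (i, j) = some (st a) → mu.conj j + 1 ≤ a)

/-- `RSE_k(λ/μ)` as a set of tableaux. -/
def RSEset (lam mu : Partition) (k : ℕ) : Set Tb := {T | IsSkewRSE lam mu k T}

/-- The weight exponent of an RSE-tableau `T = (R, E)`: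
`wt(T) = wt(R) · t_E = ∏ x_i^{a_i(R)} t_i^{b_i(R) + c_i(E)}`. -/
noncomputable def rseWtExp (T : Tb) : Var → ℕ
  | Sum.inl i => Set.ncard {j : ℕ | ∃ r, T (r, j) = some (pl i)}
  | Sum.inr i => Set.ncard {j : ℕ | ∃ a, T (i, j) = some (pl a) ∧ T (i + 1, j) = some (pl a)}
      + Set.ncard {c : ℕ × ℕ | T c = some (st i)}

/-- `∑_{T ∈ RSE_k(λ/μ)} wt(T)` as a formal power series. -/
noncomputable def rseSum (lam mu : Partition) (k : ℕ) : PS := fun d =>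
  (Set.ncard {T ∈ RSEset lam mu k | ∀ v, rseWtExp T v = d v} : ℤ)

/-- `∑_{T ∈ S} wt(T)` for a set `S` of RSE-tableaux, as a formal power series. -/
noncomputable def rseImageSum (S : Set Tb) : PS := fun d =>
  (Set.ncard {T ∈ S | ∀ v, rseWtExp T v = d v} : ℤ)

/-- Fill the cells of `μ` with the negative entries `ī` (the identification of a
skew tableau of shape `λ/μ` with a tableau of shape `λ` over the extended integers). -/
noncomputable def addBars (mu : Partition) (T : Tb) : Tb := fun c =>
  if c ∈ mu.cells then some (bar c.1) else T c


/-! ## The Lam–Pylyavskyy maps `π↑` and `π↓` -/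

/-- Update a tableau at one cell. -/
def upd (T : Tb) (c : ℕ × ℕ) (e : Option Ext) : Tb := fun c' => if c' = c then e else T c'

/-- The `R`-part of an RSE-tableau (the non-`ω`-entries). -/
noncomputable def Rpart (T : Tb) : Tb := fun c =>
  (T c).bind fun e => if ∃ a, e = st a then none else some e

/-- The `E`-part of an RSE-tableau (the `ω`-entries). -/
noncomputable def Spart (T : Tb) : Tb := fun c =>
  (T c).bind fun e => if ∃ a, e = st a then some e else none

/-- The column where a non-bumping RSK insertion into row `i` places its entry:
one past the last filled cell of row `i`; if row `i` is empty, aligned with the first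
filled cell of row `i - 1`. -/
noncomputable def placeCol (S : Tb) (i : ℕ) : ℕ :=
  if ∃ j, (S (i, j)).isSome then sSup {j | (S (i, j)).isSome} + 1
  else if ∃ j, (S (i - 1, j)).isSome then sInf {j | (S (i - 1, j)).isSome}
  else 1

/-- RSK row insertion of the entry `a` into the rows `≥ i` of the tableau `S` (with fuel):
in row `i`, the leftmost entry strictly greater than `a` is replaced by `a` and bumped into
the next row; if there is no such entry, `a` is placed at the end of row `i`. -/
noncomputable def insIn : ℕ → Tb → ℕ → Ext → Tb
  | 0, S, _, _ => S
  | (F + 1), S, i, a =>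
    if hb : ∃ j, 1 ≤ j ∧ ∃ b, S (i, j) = some b ∧ a < b then
      match S (i, Nat.find hb) with
      | some b => insIn F (upd S (i, Nat.find hb) (some a)) (i + 1) b
      | none => S
    else upd S (i, placeCol S i) (some a)

/-- The level-decreasing map `π↑` from level `k + 1` to level `k` (with all bounds given by
`N`): the entry `R(k,j)` is novel if `R(k,j) ≠ R(k+1,j)` (in particular if the cell
`(k+1,j)` is absent); row `k` of `R` is deleted and the rows `≥ k + 1` are shifted up by
one; the novel entries are RSK-inserted, in weakly increasing order (= increasing column
order), into the rows `≥ k`; the cells of the horizontal strip `sh(R)/sh(R')` left empty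
are added to `E` filled with `k` (i.e. with `k*`). -/
noncomputable def piUp (N k : ℕ) (T : Tb) : Tb :=
  let R := Rpart T
  let R1 : Tb := fun c => if c.1 < k then R c else R (c.1 + 1, c.2)
  let cols := (List.range (N + 1)).filter fun j =>
    decide (1 ≤ j ∧ (R (k, j)).isSome ∧ R (k, j) ≠ R (k + 1, j))
  let R2 := cols.foldl (fun S j =>
    match R (k, j) with
    | some a => insIn N S k a
    | none => S) R1
  fun c =>
    match R2 c with
    | some e => some e
    | none =>
      match Spart T c with
      | some e => some e
      | none => if (R c).isSome then some (st k) else none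

/-- `piUpPow N k` is the `k`-fold application `π↑^k` starting from level `k + 1`,
i.e. `π↑ (level k+1 → k)` first, then down to level `1`. -/
noncomputable def piUpPow (N : ℕ) : ℕ → Tb → Tb
  | 0 => id
  | (k + 1) => fun T => piUpPow N k (piUp N (k + 1) T)

/-- Reverse RSK row insertion of the value `v` into row `i` (with fuel), continuing upward
until a value is bumped out of row `k`: in row `i` the rightmost entry `a < v` is replaced
by `v`, and `a` is carried to row `i - 1`; the result is the updated tableau together with
the column and the value bumped out of row `k`. -/
noncomputable def revIns : ℕ → ℕ → ℕ → Tb → Ext → Tb × ℕ × Ext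
  | 0, _, _, S, v => (S, 0, v)
  | (F + 1), k, i, S, v =>
    let j0 := sSup {j | ∃ a, S (i, j) = some a ∧ a < v}
    match S (i, j0) with
    | some a =>
      if a < v then
        if i ≤ k then (upd S (i, j0) (some v), j0, a)
        else revIns F k (i - 1) (upd S (i, j0) (some v)) a
      else (S, 0, v)
    | none => (S, 0, v)

/-- Start the reverse RSK algorithm on the rows `≥ k` of `S` from the last (bottom) cell of
column `c`: that cell is removed and its value is reverse-inserted into the row above. -/
noncomputable def revStart (F k : ℕ) (S : Tb) (c : ℕ) : Tb × ℕ × Ext :=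
  let i0 := sSup {i | k ≤ i ∧ (S (i, c)).isSome}
  match S (i0, c) with
  | some v =>
    if i0 ≤ k then (upd S (i0, c) none, c, v)
    else revIns F k (i0 - 1) (upd S (i0, c) none) v
  | none => (S, 0, pl 0)

/-- The level-increasing map `π↓` from level `k` to level `k + 1` (with all bounds given by
`N`): for each column `c` (rightmost first) of `rows ≥ k` of `R` whose column of `E`
contains no `k`, the reverse RSK algorithm is applied starting from the last cell of column
`c`, bumping a value `a_i` out of row `k` at some column `b_i`; then the rows `≥ k` are
shifted down by one, and row `k` is refilled: `a_i` at column `b_i`, and the entry directly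
below in every other (originally filled) column; all entries `k` of `E` are removed. -/
noncomputable def piDown (N k : ℕ) (T : Tb) : Tb :=
  let R := Rpart T
  let cols := (List.range (N + 1)).filter fun j =>
    decide (1 ≤ j ∧ (∃ i, k ≤ i ∧ (R (i, j)).isSome) ∧ ¬ ∃ i, T (i, j) = some (st k))
  let step : ℕ → Tb × (ℕ → Option Ext) → Tb × (ℕ → Option Ext) := fun c SO =>
    let res := revStart N k SO.1 c
    (res.1, fun j => if j = res.2.1 then some res.2.2 else SO.2 j)
  let RO := cols.foldr step (R, fun _ => none)
  let R2 : Tb := fun c =>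
    if c.1 < k then RO.1 c
    else if c.1 = k then
      (if (RO.2 c.2).isSome then RO.2 c.2
       else if (R (k, c.2)).isSome then RO.1 (k, c.2) else none)
    else RO.1 (c.1 - 1, c.2)
  fun c =>
    match R2 c with
    | some e => some e
    | none =>
      match T c with
      | some e => if ∃ a, e = st a ∧ a ≠ k then some e else none
      | none => none

/-! ## Column restrictions and concatenation -/

/-- The restriction `col_{≤ s}` of a tableau to its columns `1, …, s`. -/
def colLE (s : ℕ) (T : Tb) : Tb := fun c => if c.2 ≤ s then T c else none

/-- The restriction `col_{≥ s}` of a tableau to its columns `s, s + 1, …`. -/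
def colGE (s : ℕ) (T : Tb) : Tb := fun c => if s ≤ c.2 then T c else none

/-- Concatenation `T₁ ⊔ T₂` of tableaux (with disjoint column supports, kept at their
absolute positions). -/
def hcat (T₁ T₂ : Tb) : Tb := fun c => (T₁ c).orElse fun _ => T₂ c

/-- A reverse plane partition over the extended integers: entries weakly increase along
rows and columns. -/
def IsRPPE (T : Tb) : Prop :=
  (∀ i j e₁ e₂, T (i, j) = some e₁ → T (i, j + 1) = some e₂ → e₁ ≤ e₂) ∧
  (∀ i j e₁ e₂, T (i, j) = some e₁ → T (i + 1, j) = some e₂ → e₁ ≤ e₂)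

/-- `T₁ ≤ T₂` means the concatenation `T₁ ⊔ T₂` is an RPP over the extended integers. -/
def leTab (T₁ T₂ : Tb) : Prop := IsRPPE (hcat T₁ T₂)

/-- A bound large enough for all bumping processes inside the shape `λ`. -/
noncomputable def Nbound (lam : Partition) : ℕ := lam.part 1 + lam.len + 2


/-! ### Auxiliary lemmas for the proof -/

section TabAux

lemma pl_injective : Function.Injective pl := by
  intro a b h; simpa [pl] using h

lemma st_injective : Function.Injective st := by
  intro a b h; simpa [st] using h

lemma pl_ne_st (a b : ℕ) : pl a ≠ st b := by simp [pl, st]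

/-- The number of elements of `S` that are `≤ e`. -/
noncomputable def cnt (S : Set Ext) (e : Ext) : ℕ := Set.ncard {e' ∈ S | e' ≤ e}

lemma cnt_subset (S : Set Ext) (e : Ext) : {e' ∈ S | e' ≤ e} ⊆ S := fun _ hx => hx.1

lemma cnt_pos {S : Set Ext} (hS : S.Finite) {e : Ext} (he : e ∈ S) : 1 ≤ cnt S e := by
  have hfin : {e' ∈ S | e' ≤ e}.Finite := hS.subset (cnt_subset S e)
  exact (Set.ncard_pos hfin).mpr ⟨e, he, le_rfl⟩

lemma cnt_le_ncard {S : Set Ext} (hS : S.Finite) (e : Ext) : cnt S e ≤ S.ncard :=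
  Set.ncard_le_ncard (cnt_subset S e) hS

lemma cnt_lt_cnt {S : Set Ext} (hS : S.Finite) {e₁ e₂ : Ext} (h2 : e₂ ∈ S) (h : e₁ < e₂) :
    cnt S e₁ < cnt S e₂ := by
  apply Set.ncard_lt_ncard _ (hS.subset (cnt_subset S e₂))
  constructor
  · exact fun x hx => ⟨hx.1, hx.2.trans h.le⟩
  · intro hsub
    exact absurd (hsub ⟨h2, le_rfl⟩).2 (not_le.mpr h)

lemma cnt_mono {S : Set Ext} (hS : S.Finite) {e₁ e₂ : Ext} (h : e₁ ≤ e₂) :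
    cnt S e₁ ≤ cnt S e₂ :=
  Set.ncard_le_ncard (fun x hx => ⟨hx.1, hx.2.trans h⟩) (hS.subset (cnt_subset S e₂))

lemma cnt_injOn {S : Set Ext} (hS : S.Finite) {e₁ e₂ : Ext} (h1 : e₁ ∈ S) (h2 : e₂ ∈ S)
    (h : cnt S e₁ = cnt S e₂) : e₁ = e₂ := by
  rcases lt_trichotomy e₁ e₂ with hlt | he | hlt
  · exact absurd h (Nat.ne_of_lt (cnt_lt_cnt hS h2 hlt))
  · exact he
  · exact absurd h.symm (Nat.ne_of_lt (cnt_lt_cnt hS h1 hlt))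

lemma nthSmall_eq_some_iff {S : Set Ext} (hS : S.Finite) {k : ℕ} {e : Ext} :
    nthSmall S k = some e ↔ e ∈ S ∧ cnt S e = k := by
  unfold nthSmall
  split_ifs with h
  · constructor
    · intro h'
      have hs := h.choose_spec
      have he : h.choose = e := Option.some_injective _ h'
      rw [← he]; exact hs
    · rintro ⟨he, hc⟩
      have hs := h.choose_spec
      have : h.choose = e := cnt_injOn hS hs.1 he (by rw [show cnt S h.choose = k from hs.2, show cnt S e = k from hc])
      rw [this]
  · constructor
    · intro h'; simp at h'
    · rintro ⟨he, hc⟩; exact absurd ⟨e, he, hc⟩ h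

lemma nthSmall_mono {S : Set Ext} (hS : S.Finite) {k₁ k₂ : ℕ} {e₁ e₂ : Ext}
    (h₁ : nthSmall S k₁ = some e₁) (h₂ : nthSmall S k₂ = some e₂) (h : k₁ < k₂) : e₁ < e₂ := by
  rw [nthSmall_eq_some_iff hS] at h₁ h₂
  by_contra hle
  push_neg at hle
  have := cnt_mono hS hle
  rw [h₁.2, h₂.2] at this
  omega

lemma exists_nthSmall {S : Set Ext} (hS : S.Finite) {k : ℕ} (hk1 : 1 ≤ k) (hk2 : k ≤ S.ncard) :
    ∃ e, nthSmall S k = some e := by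
  classical
  have hcard : hS.toFinset.card = S.ncard := (Set.ncard_eq_toFinset_card S hS).symm
  have hsub : hS.toFinset.image (cnt S) ⊆ Finset.Icc 1 hS.toFinset.card := by
    intro m hm
    simp only [Finset.mem_image, Set.Finite.mem_toFinset] at hm
    obtain ⟨e, he, rfl⟩ := hm
    rw [Finset.mem_Icc]
    exact ⟨cnt_pos hS he, hcard ▸ cnt_le_ncard hS e⟩
  have hinj : Set.InjOn (cnt S) ↑hS.toFinset := by
    intro a ha b hb hab
    exact cnt_injOn hS (by simpa using ha) (by simpa using hb) hab
  have hcardim : (hS.toFinset.image (cnt S)).card = hS.toFinset.card :=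
    Finset.card_image_of_injOn hinj
  have heq : hS.toFinset.image (cnt S) = Finset.Icc 1 hS.toFinset.card := by
    apply Finset.eq_of_subset_of_card_le hsub
    rw [hcardim, Nat.card_Icc]
    omega
  have hkmem : k ∈ hS.toFinset.image (cnt S) := by
    rw [heq, Finset.mem_Icc]
    omega
  simp only [Finset.mem_image, Set.Finite.mem_toFinset] at hkmem
  obtain ⟨e, he, hc⟩ := hkmem
  exact ⟨e, (nthSmall_eq_some_iff hS).mpr ⟨he, hc⟩⟩

lemma nthSmall_isSome_iff {S : Set Ext} (hS : S.Finite) {k : ℕ} :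
    (nthSmall S k).isSome ↔ 1 ≤ k ∧ k ≤ S.ncard := by
  constructor
  · intro h
    obtain ⟨e, he⟩ := Option.isSome_iff_exists.mp h
    rw [nthSmall_eq_some_iff hS] at he
    exact ⟨he.2 ▸ cnt_pos hS he.1, he.2 ▸ cnt_le_ncard hS e⟩
  · rintro ⟨h1, h2⟩
    obtain ⟨e, he⟩ := exists_nthSmall hS h1 h2
    rw [he]; rfl

/-! #### Counting steps of monotone sequences -/

lemma filter_Icc_succ (P : ℕ → Prop) [DecidablePred P] (m : ℕ) :
    ((Finset.Icc 1 (m + 1)).filter P).card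
      = ((Finset.Icc 1 m).filter P).card + (if P (m + 1) then 1 else 0) := by
  have h : Finset.Icc 1 (m + 1) = insert (m + 1) (Finset.Icc 1 m) := by
    ext x
    simp only [Finset.mem_Icc, Finset.mem_insert]
    omega
  rw [h, Finset.filter_insert]
  split_ifs with hp
  · rw [Finset.card_insert_of_notMem (by simp [Finset.mem_filter, Finset.mem_Icc])]
  · omega

lemma seq_card (f : ℕ → ℕ) (hf : ∀ m, f (m + 1) = f m ∨ f (m + 1) = f m + 1) (m : ℕ) :
    f m = f 0 + ((Finset.Icc 1 m).filter (fun k => f k = f (k - 1) + 1)).card := by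
  induction m with
  | zero => simp
  | succ m ih =>
    rw [filter_Icc_succ]
    have h1 : m + 1 - 1 = m := by omega
    rcases hf m with h | h <;> split_ifs with hd <;> rw [h1] at hd <;> omega

lemma seq_set_eq (f : ℕ → ℕ) (N : ℕ) (hstab : ∀ m, N ≤ m → f m = f N) :
    {m | 1 ≤ m ∧ f m = f (m - 1) + 1}
      = ↑((Finset.Icc 1 N).filter (fun k => f k = f (k - 1) + 1)) := by
  ext m
  simp only [Set.mem_setOf_eq, Finset.coe_filter, Finset.mem_Icc]
  constructor
  · rintro ⟨h1, h2⟩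
    refine ⟨⟨h1, ?_⟩, h2⟩
    by_contra hN
    push_neg at hN
    have e1 : f m = f N := hstab m (by omega)
    have e2 : f (m - 1) = f N := hstab (m - 1) (by omega)
    omega
  · rintro ⟨⟨h1, _⟩, h2⟩
    exact ⟨h1, h2⟩

/-! #### Diagonal-step sets of a path -/

def loSet (p : PathLP) : Set ℕ := {m | 1 ≤ m ∧ p.lo m = p.lo (m - 1) + 1}
def hiSet (p : PathLP) : Set ℕ := {m | 1 ≤ m ∧ p.hi m = p.hi (m - 1) + 1}

lemma labelSet_eq (p : PathLP) : labelSet p = pl '' loSet p ∪ st '' hiSet p := by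
  ext e
  simp only [labelSet, Set.mem_setOf_eq, Set.mem_union, Set.mem_image, loSet, hiSet]
  constructor
  · rintro ⟨m, h1, ⟨h2, rfl⟩ | ⟨h2, rfl⟩⟩
    · exact Or.inl ⟨m, ⟨h1, h2⟩, rfl⟩
    · exact Or.inr ⟨m, ⟨h1, h2⟩, rfl⟩
  · rintro (⟨m, ⟨h1, h2⟩, rfl⟩ | ⟨m, ⟨h1, h2⟩, rfl⟩)
    · exact ⟨m, h1, Or.inl ⟨h2, rfl⟩⟩
    · exact ⟨m, h1, Or.inr ⟨h2, rfl⟩⟩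

lemma loSet_finite (p : PathLP) : (loSet p).Finite := by
  obtain ⟨N, hN⟩ := p.lo_eventually
  have h : loSet p = _ := seq_set_eq p.lo N hN
  rw [h]
  exact Finset.finite_toSet _

lemma hiSet_finite (p : PathLP) : (hiSet p).Finite := by
  obtain ⟨N, hN⟩ := p.hi_eventually
  have h : hiSet p = _ := seq_set_eq p.hi N hN
  rw [h]
  exact Finset.finite_toSet _

lemma labelSet_finite (p : PathLP) : (labelSet p).Finite := by
  rw [labelSet_eq]
  exact ((loSet_finite p).image pl).union ((hiSet_finite p).image st)

lemma lo_limit (p : PathLP) {N : ℕ} (hN : ∀ m, N ≤ m → p.lo m = p.lo N) :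
    p.lo N = p.lo 0 + (loSet p).ncard := by
  have h : loSet p = ↑((Finset.Icc 1 N).filter (fun k => p.lo k = p.lo (k - 1) + 1)) :=
    seq_set_eq p.lo N hN
  rw [h, Set.ncard_coe_finset]
  exact seq_card p.lo p.lo_step N

lemma hi_limit (p : PathLP) {N : ℕ} (hN : ∀ m, N ≤ m → p.hi m = p.hi N) :
    p.hi N = p.hi 0 + (hiSet p).ncard := by
  have h : hiSet p = ↑((Finset.Icc 1 N).filter (fun k => p.hi k = p.hi (k - 1) + 1)) :=
    seq_set_eq p.hi N hN
  rw [h, Set.ncard_coe_finset]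
  exact seq_card p.hi p.hi_step N

lemma ncard_pl_st_union {A B : Set ℕ} (hA : A.Finite) (hB : B.Finite) :
    (pl '' A ∪ st '' B).ncard = A.ncard + B.ncard := by
  have hd : Disjoint (pl '' A) (st '' B) := by
    rw [Set.disjoint_left]
    rintro e ⟨a, _, rfl⟩ ⟨b, _, hab⟩
    exact pl_ne_st a b hab.symm
  rw [Set.ncard_union_eq hd (hA.image pl) (hB.image st),
    Set.ncard_image_of_injective _ pl_injective, Set.ncard_image_of_injective _ st_injective]

lemma ncard_labelSet (p : PathLP) :
    (labelSet p).ncard = (loSet p).ncard + (hiSet p).ncard := by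
  rw [labelSet_eq]
  exact ncard_pl_st_union (loSet_finite p) (hiSet_finite p)

lemma path_count {p : PathLP} {a b : ℕ} (h : PathFromTo p a b) :
    b = a + (labelSet p).ncard := by
  obtain ⟨h0, Nb, hNb⟩ := h
  obtain ⟨Nl, hNl, hlink⟩ := p.link
  obtain ⟨Nh, hNh⟩ := p.hi_eventually
  have h1 : ∀ m, max Nh Nb ≤ m → p.hi m = p.hi (max Nh Nb) := by
    intro m hm
    rw [hNh m (le_trans (le_max_left _ _) hm), hNh (max Nh Nb) (le_max_left _ _)]
  have h2 := hi_limit p h1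
  have h3 : p.hi (max Nh Nb) = b := hNb _ (le_max_right _ _)
  have h4 := lo_limit p hNl
  rw [ncard_labelSet]
  omega

lemma PathLP.ext' {p q : PathLP} (h1 : p.lo = q.lo) (h2 : p.hi = q.hi) : p = q := by
  cases p; cases q; cases h1; cases h2; rfl

lemma mem_loSet_iff {p : PathLP} {m : ℕ} : m ∈ loSet p ↔ pl m ∈ labelSet p := by
  rw [labelSet_eq]
  constructor
  · intro h
    exact Or.inl ⟨m, h, rfl⟩
  · rintro (h | h)
    · obtain ⟨a, ha, he⟩ := h
      rwa [pl_injective he] at ha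
    · obtain ⟨a, ha, he⟩ := h
      exact absurd he.symm (pl_ne_st m a)

lemma mem_hiSet_iff {p : PathLP} {m : ℕ} : m ∈ hiSet p ↔ st m ∈ labelSet p := by
  rw [labelSet_eq]
  constructor
  · intro h
    exact Or.inr ⟨m, h, rfl⟩
  · rintro (h | h)
    · obtain ⟨a, ha, he⟩ := h
      exact absurd he (pl_ne_st a m)
    · obtain ⟨a, ha, he⟩ := h
      rwa [st_injective he] at ha

lemma path_eq {p q : PathLP} (h0 : p.lo 0 = q.lo 0) (hl : labelSet p = labelSet q) : p = q := by
  have hlo : loSet p = loSet q := by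
    ext m; rw [mem_loSet_iff, mem_loSet_iff, hl]
  have hhi : hiSet p = hiSet q := by
    ext m; rw [mem_hiSet_iff, mem_hiSet_iff, hl]
  have hfilt : ∀ m, ((Finset.Icc 1 m).filter (fun k => p.lo k = p.lo (k - 1) + 1))
      = ((Finset.Icc 1 m).filter (fun k => q.lo k = q.lo (k - 1) + 1)) := by
    intro m
    apply Finset.filter_congr
    intro k hk
    rw [Finset.mem_Icc] at hk
    have h1 : k ∈ loSet p ↔ k ∈ loSet q := by rw [hlo]
    simp only [loSet, Set.mem_setOf_eq] at h1
    simp only [hk.1, true_and] at h1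
    exact h1
  have hloF : ∀ m, p.lo m = q.lo m := by
    intro m
    rw [seq_card p.lo p.lo_step m, seq_card q.lo q.lo_step m, h0, hfilt]
  have hhi0 : p.hi 0 = q.hi 0 := by
    obtain ⟨Np, hNp, hlp⟩ := p.link
    obtain ⟨Nq, hNq, hlq⟩ := q.link
    rw [hlp, hlq, lo_limit p hNp, lo_limit q hNq, h0, hlo]
  have hfilt' : ∀ m, ((Finset.Icc 1 m).filter (fun k => p.hi k = p.hi (k - 1) + 1))
      = ((Finset.Icc 1 m).filter (fun k => q.hi k = q.hi (k - 1) + 1)) := by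
    intro m
    apply Finset.filter_congr
    intro k hk
    rw [Finset.mem_Icc] at hk
    have h1 : k ∈ hiSet p ↔ k ∈ hiSet q := by rw [hhi]
    simp only [hiSet, Set.mem_setOf_eq] at h1
    simp only [hk.1, true_and] at h1
    exact h1
  have hhiF : ∀ m, p.hi m = q.hi m := by
    intro m
    rw [seq_card p.hi p.hi_step m, seq_card q.hi q.hi_step m, hhi0, hfilt']
  exact PathLP.ext' (funext hloF) (funext hhiF)

/-! #### Enumeration lemma -/

lemma enum_lemma {S : Set Ext} {s : ℕ} {f : ℕ → Ext}
    (hmem : ∀ k, 1 ≤ k → k ≤ s → f k ∈ S)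
    (hmono : ∀ k, 1 ≤ k → k + 1 ≤ s → f k < f (k + 1))
    (hcover : ∀ e ∈ S, ∃ k, 1 ≤ k ∧ k ≤ s ∧ f k = e) :
    S.Finite ∧ S.ncard = s ∧ ∀ k, 1 ≤ k → k ≤ s → nthSmall S k = some (f k) := by
  have hlt : ∀ k k', 1 ≤ k → k < k' → k' ≤ s → f k < f k' := by
    intro k k' hk
    induction k' with
    | zero => omega
    | succ k' ih =>
      intro hkk' hk's
      rcases Nat.lt_or_ge k k' with h | h
      · exact (ih h (by omega)).trans (hmono k' (by omega) hk's)
      · have hkk : k = k' := by omega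
        subst hkk
        exact hmono k hk hk's
  have hS : S = ↑((Finset.Icc 1 s).image f) := by
    ext e
    simp only [Finset.coe_image, Set.mem_image, Finset.mem_coe, Finset.mem_Icc]
    constructor
    · intro he
      obtain ⟨k, h1, h2, h3⟩ := hcover e he
      exact ⟨k, ⟨h1, h2⟩, h3⟩
    · rintro ⟨k, ⟨h1, h2⟩, rfl⟩
      exact hmem k h1 h2
  have hinj : Set.InjOn f ↑(Finset.Icc 1 s) := by
    intro a ha b hb hab
    simp only [Finset.coe_Icc, Set.mem_Icc] at ha hb
    by_contra hne
    rcases Nat.lt_or_ge a b with h | h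
    · exact absurd hab (ne_of_lt (hlt a b ha.1 h hb.2))
    · have h' : b < a := by omega
      exact absurd hab.symm (ne_of_lt (hlt b a hb.1 h' ha.2))
  have hfin : S.Finite := by rw [hS]; exact Finset.finite_toSet _
  have hncard : S.ncard = s := by
    rw [hS, Set.ncard_coe_finset, Finset.card_image_of_injOn hinj, Nat.card_Icc]
    omega
  refine ⟨hfin, hncard, ?_⟩
  intro k hk1 hk2
  rw [nthSmall_eq_some_iff hfin]
  refine ⟨hmem k hk1 hk2, ?_⟩
  have hinjk : Set.InjOn f ↑(Finset.Icc 1 k) := by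
    intro a ha b hb hab
    simp only [Finset.coe_Icc, Set.mem_Icc] at ha hb
    refine hinj ?_ ?_ hab <;> simp only [Finset.coe_Icc, Set.mem_Icc] <;> omega
  have hset : {e' ∈ S | e' ≤ f k} = ↑((Finset.Icc 1 k).image f) := by
    ext e
    simp only [Set.mem_setOf_eq, Finset.coe_image, Set.mem_image, Finset.mem_coe,
      Finset.mem_Icc]
    constructor
    · rintro ⟨he, hle⟩
      obtain ⟨k', h1, h2, rfl⟩ := hcover e he
      refine ⟨k', ⟨h1, ?_⟩, rfl⟩
      by_contra hgt
      push_neg at hgt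
      exact absurd hle (not_le.mpr (hlt k k' hk1 hgt h2))
    · rintro ⟨k', ⟨h1, h2⟩, rfl⟩
      refine ⟨hmem k' h1 (le_trans h2 hk2), ?_⟩
      rcases Nat.lt_or_ge k' k with h | h
      · exact (hlt k' k h1 h hk2).le
      · have hkk : k' = k := by omega
        subst hkk
        exact le_rfl
  unfold cnt
  rw [hset, Set.ncard_coe_finset, Finset.card_image_of_injOn hinjk, Nat.card_Icc]
  omega

end TabAux


section TabAux2

lemma filter_Icc_stab (A : Finset ℕ) (m : ℕ) (hm : A.sup id ≤ m) :
    (Finset.Icc 1 m).filter (· ∈ A) = (Finset.Icc 1 (A.sup id)).filter (· ∈ A) := by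
  ext k
  simp only [Finset.mem_filter, Finset.mem_Icc]
  constructor
  · rintro ⟨⟨h1, h2⟩, h3⟩
    exact ⟨⟨h1, Finset.le_sup (f := id) h3⟩, h3⟩
  · rintro ⟨⟨h1, h2⟩, h3⟩
    exact ⟨⟨h1, le_trans h2 hm⟩, h3⟩

lemma filter_Icc_sup (A : Finset ℕ) (hA : ∀ m ∈ A, 1 ≤ m) :
    (Finset.Icc 1 (A.sup id)).filter (· ∈ A) = A := by
  ext k
  simp only [Finset.mem_filter, Finset.mem_Icc]
  constructor
  · rintro ⟨_, h⟩
    exact h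
  · intro h
    exact ⟨⟨hA k h, Finset.le_sup (f := id) h⟩, h⟩

/-- The path from `(a,0)` whose diagonal steps end exactly at the heights in `A`
(below `ω`) and at `ω +` the heights in `B`. -/
noncomputable def mkPath (a : ℕ) (A B : Finset ℕ) : PathLP where
  lo m := a + ((Finset.Icc 1 m).filter (· ∈ A)).card
  hi m := a + ((Finset.Icc 1 (A.sup id)).filter (· ∈ A)).card
            + ((Finset.Icc 1 m).filter (· ∈ B)).card
  lo_step m := by
    rw [filter_Icc_succ]
    split_ifs <;> omega
  hi_step m := by
    rw [filter_Icc_succ]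
    split_ifs <;> omega
  lo_eventually := ⟨A.sup id, fun m hm => by rw [filter_Icc_stab A m hm]⟩
  hi_eventually := ⟨B.sup id, fun m hm => by rw [filter_Icc_stab B m hm]⟩
  link := by
    refine ⟨A.sup id, fun m hm => by rw [filter_Icc_stab A m hm], ?_⟩
    rw [Finset.Icc_eq_empty (by omega : ¬ (1 : ℕ) ≤ 0)]
    simp

lemma mkPath_lo (a : ℕ) (A B : Finset ℕ) (m : ℕ) :
    (mkPath a A B).lo m = a + ((Finset.Icc 1 m).filter (· ∈ A)).card := rfl

lemma mkPath_hi (a : ℕ) (A B : Finset ℕ) (m : ℕ) :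
    (mkPath a A B).hi m = a + ((Finset.Icc 1 (A.sup id)).filter (· ∈ A)).card
      + ((Finset.Icc 1 m).filter (· ∈ B)).card := rfl

lemma mkPath_lo0 (a : ℕ) (A B : Finset ℕ) : (mkPath a A B).lo 0 = a := by
  rw [mkPath_lo, Finset.Icc_eq_empty (by omega : ¬ (1 : ℕ) ≤ 0)]
  simp

lemma mkPath_loSet (a : ℕ) (A B : Finset ℕ) (hA : ∀ m ∈ A, 1 ≤ m) :
    loSet (mkPath a A B) = ↑A := by
  ext m
  simp only [loSet, Set.mem_setOf_eq, Finset.mem_coe]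
  constructor
  · rintro ⟨h1, h2⟩
    have hm : m - 1 + 1 = m := by omega
    have hstep := filter_Icc_succ (· ∈ A) (m - 1)
    rw [hm] at hstep
    rw [mkPath_lo, mkPath_lo] at h2
    split_ifs at hstep with h
    · exact h
    · omega
  · intro h
    have h1 : 1 ≤ m := hA m h
    have hm : m - 1 + 1 = m := by omega
    have hstep := filter_Icc_succ (· ∈ A) (m - 1)
    rw [hm] at hstep
    rw [if_pos h] at hstep
    refine ⟨h1, ?_⟩
    rw [mkPath_lo, mkPath_lo]
    omega

lemma mkPath_hiSet (a : ℕ) (A B : Finset ℕ) (hB : ∀ m ∈ B, 1 ≤ m) :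
    hiSet (mkPath a A B) = ↑B := by
  ext m
  simp only [hiSet, Set.mem_setOf_eq, Finset.mem_coe]
  constructor
  · rintro ⟨h1, h2⟩
    have hm : m - 1 + 1 = m := by omega
    have hstep := filter_Icc_succ (· ∈ B) (m - 1)
    rw [hm] at hstep
    rw [mkPath_hi, mkPath_hi] at h2
    split_ifs at hstep with h
    · exact h
    · omega
  · intro h
    have h1 : 1 ≤ m := hB m h
    have hm : m - 1 + 1 = m := by omega
    have hstep := filter_Icc_succ (· ∈ B) (m - 1)
    rw [hm] at hstep
    rw [if_pos h] at hstep
    refine ⟨h1, ?_⟩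
    rw [mkPath_hi, mkPath_hi]
    omega

lemma mkPath_fromTo (a : ℕ) (A B : Finset ℕ) (hA : ∀ m ∈ A, 1 ≤ m) (hB : ∀ m ∈ B, 1 ≤ m) :
    PathFromTo (mkPath a A B) a (a + A.card + B.card) := by
  refine ⟨mkPath_lo0 a A B, B.sup id, fun m hm => ?_⟩
  rw [mkPath_hi, filter_Icc_stab B m hm, filter_Icc_sup A hA, filter_Icc_sup B hB]

lemma mkPath_labelSet (a : ℕ) (A B : Finset ℕ) (hA : ∀ m ∈ A, 1 ≤ m)
    (hB : ∀ m ∈ B, 1 ≤ m) :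
    labelSet (mkPath a A B) = pl '' ↑A ∪ st '' ↑B := by
  rw [labelSet_eq, mkPath_loSet a A B hA, mkPath_hiSet a A B hB]

/-! #### Unfolding `TabU` -/

lemma TabU_at (alpha : ℕ → ℕ) (n : ℕ) (p : NPath n) (i : Fin n) (k : ℕ) (hk : 1 ≤ k) :
    TabU alpha n p (alpha (i.1 + 1) + k, i.1 + 1) = nthSmall (labelSet (p i)) k := by
  simp only [TabU, Nat.add_sub_cancel, Nat.add_sub_cancel_left, Fin.eta]
  rw [dif_pos ⟨Nat.le_add_left 1 _, i.2, by omega⟩]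

end TabAux2


section TabAux3

lemma TabU_eq_some {alpha : ℕ → ℕ} {n : ℕ} {p : NPath n} {c : ℕ × ℕ} {e : Ext}
    (hc : TabU alpha n p c = some e) :
    ∃ i : Fin n, c = (alpha (i.1 + 1) + cnt (labelSet (p i)) e, i.1 + 1) ∧
      e ∈ labelSet (p i) := by
  by_cases hcond : 1 ≤ c.2 ∧ c.2 ≤ n ∧ alpha c.2 < c.1
  · obtain ⟨h1, h2, h3⟩ := hcond
    have hlt : c.2 - 1 < n := by omega
    set i : Fin n := ⟨c.2 - 1, hlt⟩ with hidef
    have hi1 : (i : ℕ) = c.2 - 1 := rfl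
    have h21 : (i : ℕ) + 1 = c.2 := by omega
    have hTat := TabU_at alpha n p i (c.1 - alpha c.2) (by omega)
    rw [h21] at hTat
    have hpair : (alpha c.2 + (c.1 - alpha c.2), c.2) = c := by
      have hx : alpha c.2 + (c.1 - alpha c.2) = c.1 := by omega
      rw [hx]
    rw [hpair] at hTat
    rw [hTat] at hc
    obtain ⟨hmem, hcnt⟩ := (nthSmall_eq_some_iff (labelSet_finite _)).mp hc
    refine ⟨i, ?_, hmem⟩
    rw [hcnt, h21]
    exact hpair.symm
  · rw [show TabU alpha n p c = none from ?_] at hc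
    · exact absurd hc (by simp)
    · simp only [TabU]
      rw [dif_neg hcond]

lemma TabU_mem (alpha : ℕ → ℕ) (n : ℕ) (p : NPath n) (i : Fin n) {e : Ext}
    (he : e ∈ labelSet (p i)) :
    TabU alpha n p (alpha (i.1 + 1) + cnt (labelSet (p i)) e, i.1 + 1) = some e := by
  rw [TabU_at alpha n p i _ (cnt_pos (labelSet_finite _) he)]
  exact (nthSmall_eq_some_iff (labelSet_finite _)).mpr ⟨he, rfl⟩

lemma weight_count (alpha : ℕ → ℕ) (n : ℕ) (p : NPath n) (e : Ext) :
    {c : ℕ × ℕ | TabU alpha n p c = some e}.ncard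
      = (Finset.univ.filter (fun i : Fin n => e ∈ labelSet (p i))).card := by
  have hCF : {c : ℕ × ℕ | TabU alpha n p c = some e}
      = (fun i : Fin n => (alpha (i.1 + 1) + cnt (labelSet (p i)) e, i.1 + 1)) ''
        {i : Fin n | e ∈ labelSet (p i)} := by
    ext c
    simp only [Set.mem_setOf_eq, Set.mem_image]
    constructor
    · intro hc
      obtain ⟨i, hci, hmem⟩ := TabU_eq_some hc
      exact ⟨i, hmem, hci.symm⟩
    · rintro ⟨i, hmem, rfl⟩
      exact TabU_mem alpha n p i hmem
  have hinj : Function.Injective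
      (fun i : Fin n => (alpha (i.1 + 1) + cnt (labelSet (p i)) e, i.1 + 1)) := by
    intro i j hij
    simp only [Prod.mk.injEq] at hij
    exact Fin.ext (by omega)
  rw [hCF, Set.ncard_image_of_injective _ hinj,
    show {i : Fin n | e ∈ labelSet (p i)}
        = ↑(Finset.univ.filter (fun i : Fin n => e ∈ labelSet (p i))) from by
      ext i; simp,
    Set.ncard_coe_finset]

/-- The set of entries of column `j` of a tableau. -/
def colSet (T : Tb) (j : ℕ) : Set Ext := {e | ∃ r', T (r', j) = some e}

lemma mem_colSet {T : Tb} {j : ℕ} {e : Ext} :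
    e ∈ colSet T j ↔ ∃ r', T (r', j) = some e := Iff.rfl

end TabAux3


/-- **Proposition: `Tab` is a bijection from `L(α,β)` to `VT(V(β)/V(α))`.**
Moreover, if `Tab(p) = T`, then for every `h ≥ 1` the total number of diagonal steps of `p`
ending at height `h` (resp. `ω + h`) equals the number of entries `h` (resp. `h*`) in `T`. -/
theorem tab_bijOn_verticalTableaux (alpha beta : ℕ → ℕ) (n : ℕ)
    (hsub : ∀ j, 1 ≤ j → j ≤ n → alpha j ≤ beta j) :
    Set.BijOn (TabU alpha n) (Lab alpha beta n) {T | IsVTsh (VTcells alpha beta n) T} ∧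
    ∀ p ∈ Lab alpha beta n, ∀ h, 1 ≤ h →
      ((∑ i : Fin n, if (p i).lo h = (p i).lo (h - 1) + 1 then 1 else 0) =
          Set.ncard {c : ℕ × ℕ | TabU alpha n p c = some (pl h)} ∧
        (∑ i : Fin n, if (p i).hi h = (p i).hi (h - 1) + 1 then 1 else 0) =
          Set.ncard {c : ℕ × ℕ | TabU alpha n p c = some (st h)}) := by
  have key : ∀ p ∈ Lab alpha beta n, ∀ i : Fin n,
      (labelSet (p i)).ncard = beta (i.1 + 1) - alpha (i.1 + 1) := by
    intro p hp i
    have h := path_count (hp i)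
    have h1 : i.1 + 1 ≤ n := i.2
    have h2 : alpha (i.1 + 1) ≤ beta (i.1 + 1) := hsub _ (by omega) h1
    omega
  constructor
  · refine ⟨?_, ?_, ?_⟩
    · -- MapsTo
      intro p hp
      simp only [Set.mem_setOf_eq]
      refine ⟨?_, ?_, ?_⟩
      · -- support
        intro c
        constructor
        · intro hs
          obtain ⟨e, he⟩ := Option.isSome_iff_exists.mp hs
          obtain ⟨i, hci, hmem⟩ := TabU_eq_some he
          have hk := key p hp i
          have hcnt1 := cnt_pos (labelSet_finite (p i)) hmem
          have hcnt2 := cnt_le_ncard (labelSet_finite (p i)) e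
          have hab := hsub (i.1 + 1) (by omega) i.2
          subst hci
          exact ⟨show 1 ≤ i.1 + 1 by omega, show i.1 + 1 ≤ n from i.2,
            show alpha (i.1 + 1) < alpha (i.1 + 1) + cnt (labelSet (p i)) e by omega,
            show alpha (i.1 + 1) + cnt (labelSet (p i)) e ≤ beta (i.1 + 1) by omega⟩
        · intro hmem
          have hm : 1 ≤ c.2 ∧ c.2 ≤ n ∧ alpha c.2 < c.1 ∧ c.1 ≤ beta c.2 := hmem
          obtain ⟨h1, h2, h3, h4⟩ := hm
          have hlt : c.2 - 1 < n := by omega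
          set i : Fin n := ⟨c.2 - 1, hlt⟩ with hidef
          have hi1 : (i : ℕ) = c.2 - 1 := rfl
          have h21 : (i : ℕ) + 1 = c.2 := by omega
          have hk := key p hp i
          have hTat := TabU_at alpha n p i (c.1 - alpha c.2) (by omega)
          rw [h21] at hTat
          have hpair : (alpha c.2 + (c.1 - alpha c.2), c.2) = c := by
            have hx : alpha c.2 + (c.1 - alpha c.2) = c.1 := by omega
            rw [hx]
          rw [hpair] at hTat
          rw [hTat, nthSmall_isSome_iff (labelSet_finite _), hk, h21]
          have hab := hsub c.2 h1 h2
          omega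
      · -- entries are pl/st with positive index
        intro c e hce
        obtain ⟨i, _, hmem⟩ := TabU_eq_some hce
        rw [labelSet_eq] at hmem
        rcases hmem with ⟨m, hm, rfl⟩ | ⟨m, hm, rfl⟩
        · exact ⟨m, hm.1, Or.inl rfl⟩
        · exact ⟨m, hm.1, Or.inr rfl⟩
      · -- strictly increasing down columns
        intro r j e₁ e₂ h1 h2
        obtain ⟨i₁, hc1, hm1⟩ := TabU_eq_some h1
        obtain ⟨i₂, hc2, hm2⟩ := TabU_eq_some h2
        rw [Prod.mk.injEq] at hc1 hc2
        have hi12 : i₁ = i₂ := Fin.ext (by omega)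
        subst hi12
        have hfin := labelSet_finite (p i₁)
        have hlt : cnt (labelSet (p i₁)) e₁ < cnt (labelSet (p i₁)) e₂ := by omega
        by_contra hle
        push_neg at hle
        have := cnt_mono hfin hle
        omega
    · -- InjOn
      intro p hp q hq hpq
      funext i
      have main : ∀ p' q' : NPath n, TabU alpha n p' = TabU alpha n q' →
          labelSet (p' i) ⊆ labelSet (q' i) := by
        intro p' q' hΤ e he
        have h1 := TabU_mem alpha n p' i he
        rw [hΤ] at h1
        obtain ⟨i', hci, hmem⟩ := TabU_eq_some h1
        rw [Prod.mk.injEq] at hci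
        have hii : i' = i := Fin.ext (by omega)
        subst hii
        exact hmem
      apply path_eq
      · rw [(hp i).1, (hq i).1]
      · exact Set.Subset.antisymm (main p q hpq) (main q p hpq.symm)
    · -- SurjOn
      intro T hT
      have hT' : IsVTsh (VTcells alpha beta n) T := hT
      obtain ⟨hsupp, hent, hcol⟩ := hT'
      have colmain : ∀ j, 1 ≤ j → j ≤ n →
          ((colSet T j).Finite ∧
           (colSet T j).ncard = beta j - alpha j ∧
           ∀ k, 1 ≤ k → k ≤ beta j - alpha j →
             nthSmall (colSet T j) k = some ((T (alpha j + k, j)).getD (pl 0))) := by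
        intro j hj1 hj2
        have hab := hsub j hj1 hj2
        have hcell : ∀ k, 1 ≤ k → k ≤ beta j - alpha j → (T (alpha j + k, j)).isSome := by
          intro k hk1 hk2
          exact (hsupp _).mpr ⟨show 1 ≤ j from hj1, show j ≤ n from hj2,
            show alpha j < alpha j + k by omega, show alpha j + k ≤ beta j by omega⟩
        refine enum_lemma (f := fun k => (T (alpha j + k, j)).getD (pl 0)) ?_ ?_ ?_
        · intro k hk1 hk2
          obtain ⟨e, he⟩ := Option.isSome_iff_exists.mp (hcell k hk1 hk2)
          exact ⟨alpha j + k, by rw [he, Option.getD_some]⟩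
        · intro k hk1 hk2
          obtain ⟨e₁, he₁⟩ := Option.isSome_iff_exists.mp (hcell k (by omega) (by omega))
          obtain ⟨e₂, he₂⟩ := Option.isSome_iff_exists.mp (hcell (k + 1) (by omega) hk2)
          have hlt := hcol (alpha j + k) j e₁ e₂ he₁ (by
            rw [show alpha j + k + 1 = alpha j + (k + 1) from by omega]
            exact he₂)
          rw [he₁, he₂, Option.getD_some, Option.getD_some]
          exact hlt
        · intro e he
          obtain ⟨r, hr⟩ := he
          have hsome : (T (r, j)).isSome := by rw [hr]; rfl
          have hm : 1 ≤ j ∧ j ≤ n ∧ alpha j < r ∧ r ≤ beta j := (hsupp _).mp hsome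
          refine ⟨r - alpha j, by omega, by omega, ?_⟩
          rw [show alpha j + (r - alpha j) = r from by omega, hr, Option.getD_some]
      have hfinA : ∀ i : Fin n, {m : ℕ | pl m ∈ colSet T (i.1 + 1)}.Finite := by
        intro i
        exact Set.Finite.preimage pl_injective.injOn (colmain (i.1 + 1) (by omega) i.2).1
      have hfinB : ∀ i : Fin n, {m : ℕ | st m ∈ colSet T (i.1 + 1)}.Finite := by
        intro i
        exact Set.Finite.preimage st_injective.injOn (colmain (i.1 + 1) (by omega) i.2).1
      set P : NPath n := fun i =>
        mkPath (alpha (i.1 + 1) + n - (i.1 + 1)) (hfinA i).toFinset (hfinB i).toFinset with hP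
      have hA : ∀ i : Fin n, ∀ m ∈ (hfinA i).toFinset, 1 ≤ m := by
        intro i m hm
        rw [Set.Finite.mem_toFinset] at hm
        obtain ⟨r, hr⟩ := hm
        obtain ⟨a, ha1, ha2 | ha2⟩ := hent _ _ hr
        · rw [pl_injective ha2]; exact ha1
        · exact absurd ha2 (pl_ne_st m a)
      have hB : ∀ i : Fin n, ∀ m ∈ (hfinB i).toFinset, 1 ≤ m := by
        intro i m hm
        rw [Set.Finite.mem_toFinset] at hm
        obtain ⟨r, hr⟩ := hm
        obtain ⟨a, ha1, ha2 | ha2⟩ := hent _ _ hr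
        · exact absurd ha2.symm (pl_ne_st a m)
        · rw [st_injective ha2]; exact ha1
      have hlabel : ∀ i : Fin n, labelSet (P i) = colSet T (i.1 + 1) := by
        intro i
        rw [hP]
        dsimp only
        rw [mkPath_labelSet _ _ _ (hA i) (hB i)]
        ext e
        simp only [Set.mem_union, Set.mem_image, Set.Finite.coe_toFinset, Set.mem_setOf_eq]
        constructor
        · rintro (⟨m, hm, rfl⟩ | ⟨m, hm, rfl⟩)
          · exact hm
          · exact hm
        · intro he
          obtain ⟨r, hr⟩ := he
          obtain ⟨a, ha1, rfl | rfl⟩ := hent _ _ hr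
          · exact Or.inl ⟨a, ⟨r, hr⟩, rfl⟩
          · exact Or.inr ⟨a, ⟨r, hr⟩, rfl⟩
      have hcard : ∀ i : Fin n,
          (hfinA i).toFinset.card + (hfinB i).toFinset.card
            = beta (i.1 + 1) - alpha (i.1 + 1) := by
        intro i
        have h1 := ncard_labelSet (P i)
        rw [hlabel i, (colmain (i.1 + 1) (by omega) i.2).2.1] at h1
        have h2 : loSet (P i) = ↑(hfinA i).toFinset := by
          rw [hP]; exact mkPath_loSet _ _ _ (hA i)
        have h3 : hiSet (P i) = ↑(hfinB i).toFinset := by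
          rw [hP]; exact mkPath_hiSet _ _ _ (hB i)
        rw [h2, h3, Set.ncard_coe_finset, Set.ncard_coe_finset] at h1
        omega
      refine ⟨P, ?_, ?_⟩
      · -- P ∈ Lab
        intro i
        have hab := hsub (i.1 + 1) (by omega) i.2
        have hc := hcard i
        have hi2 : i.1 + 1 ≤ n := i.2
        obtain ⟨h0, N, hN⟩ := mkPath_fromTo (alpha (i.1 + 1) + n - (i.1 + 1))
          (hfinA i).toFinset (hfinB i).toFinset (hA i) (hB i)
        constructor
        · rw [hP]; exact h0
        · refine ⟨N, fun m hm => ?_⟩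
          rw [hP]
          dsimp only
          rw [hN m hm]
          omega
      · -- TabU alpha n P = T
        funext c
        by_cases hcond : 1 ≤ c.2 ∧ c.2 ≤ n ∧ alpha c.2 < c.1
        · obtain ⟨h1, h2, h3⟩ := hcond
          have hab := hsub c.2 h1 h2
          have hltc : c.2 - 1 < n := by omega
          set i : Fin n := ⟨c.2 - 1, hltc⟩ with hidef
          have hi1 : (i : ℕ) = c.2 - 1 := rfl
          have h21 : (i : ℕ) + 1 = c.2 := by omega
          have hTat := TabU_at alpha n P i (c.1 - alpha c.2) (by omega)
          rw [h21] at hTat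
          have hpair : (alpha c.2 + (c.1 - alpha c.2), c.2) = c := by
            have hx : alpha c.2 + (c.1 - alpha c.2) = c.1 := by omega
            rw [hx]
          rw [hpair] at hTat
          rw [hTat, hlabel i, h21]
          by_cases hle : c.1 ≤ beta c.2
          · have hns := (colmain c.2 h1 h2).2.2 (c.1 - alpha c.2) (by omega) (by omega)
            rw [hns, show alpha c.2 + (c.1 - alpha c.2) = c.1 from by omega]
            have hsome : (T c).isSome := (hsupp c).mpr ⟨h1, h2, h3, hle⟩
            obtain ⟨e, he⟩ := Option.isSome_iff_exists.mp hsome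
            rw [show ((c.1, c.2) : ℕ × ℕ) = c from rfl, he, Option.getD_some]
          · have hnone : nthSmall (colSet T c.2) (c.1 - alpha c.2) = none := by
              rw [← Option.not_isSome_iff_eq_none,
                nthSmall_isSome_iff (colmain c.2 h1 h2).1, (colmain c.2 h1 h2).2.1]
              omega
            rw [hnone]
            symm
            rw [← Option.not_isSome_iff_eq_none]
            intro hs
            have hm : 1 ≤ c.2 ∧ c.2 ≤ n ∧ alpha c.2 < c.1 ∧ c.1 ≤ beta c.2 := (hsupp c).mp hs
            exact absurd hm.2.2.2 (by omega)
        · simp only [TabU]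
          rw [dif_neg hcond]
          symm
          rw [← Option.not_isSome_iff_eq_none]
          intro hs
          have hm : 1 ≤ c.2 ∧ c.2 ≤ n ∧ alpha c.2 < c.1 ∧ c.1 ≤ beta c.2 := (hsupp c).mp hs
          exact hcond ⟨hm.1, hm.2.1, hm.2.2.1⟩
  · -- weight preservation
    intro p hp h hh
    have hiffl : ∀ i : Fin n,
        ((p i).lo h = (p i).lo (h - 1) + 1) ↔ pl h ∈ labelSet (p i) := by
      intro i
      rw [← mem_loSet_iff]
      exact ⟨fun hx => ⟨hh, hx⟩, fun hx => hx.2⟩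
    have hiffh : ∀ i : Fin n,
        ((p i).hi h = (p i).hi (h - 1) + 1) ↔ st h ∈ labelSet (p i) := by
      intro i
      rw [← mem_hiSet_iff]
      exact ⟨fun hx => ⟨hh, hx⟩, fun hx => hx.2⟩
    constructor
    · rw [weight_count alpha n p (pl h), Finset.card_filter]
      apply Finset.sum_congr rfl
      intro i _
      simp only [hiffl i]
    · rw [weight_count alpha n p (st h), Finset.card_filter]
      apply Finset.sum_congr rfl
      intro i _
      simp only [hiffh i]


end GrothJT
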